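/- Let g ≥ 2, let S_g = ⟨a₁, b₁, …, a_g, b_g ∣ [a₁,b₁][a₂,b₂]⋯[a_g,b_g] = 1⟩ be the fundamental group of the closed orientable surface of genus g, and let M ∈ GL(2, ℤ) with det M = 1. Let G_M = ℤ² ⋊_M ℤ be the semidirect product in which the generator of ℤ acts on ℤ² by M. Then every group homomorphism f : S_g → G_M has nontrivial kernel. -/

import Mathlib

open Matrix
open scoped commutatorElement

/-- The additive automorphism of `ℤ²` given by an invertible integer matrix. -/
def matrixAddAut (M : GL (Fin 2) ℤ) : (Fin 2 → ℤ) ≃+ (Fin 2 → ℤ) where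
  toFun v := (M : Matrix (Fin 2) (Fin 2) ℤ).mulVec v
  invFun v := (↑M⁻¹ : Matrix (Fin 2) (Fin 2) ℤ).mulVec v
  left_inv v := by
    dsimp only
    rw [Matrix.mulVec_mulVec, ← Matrix.GeneralLinearGroup.coe_mul]
    simp
  right_inv v := by
    dsimp only
    rw [Matrix.mulVec_mulVec, ← Matrix.GeneralLinearGroup.coe_mul]
    simp
  map_add' u v := by simp [Matrix.mulVec_add]

/-- The action of `ℤ` on `ℤ²` in which the generator `1` acts by the matrix `M`. -/
def torusBundleAction (M : GL (Fin 2) ℤ) :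
    Multiplicative ℤ →* MulAut (Multiplicative (Fin 2 → ℤ)) :=
  zpowersHom _ (AddEquiv.toMultiplicative (matrixAddAut M))

/-- The fundamental group `G_M = ℤ² ⋊_M ℤ` of the torus bundle over `S¹` with
monodromy `M`. -/
abbrev TorusBundleGroup (M : GL (Fin 2) ℤ) : Type :=
  SemidirectProduct (Multiplicative (Fin 2 → ℤ)) (Multiplicative ℤ) (torusBundleAction M)

/-- The projection `G_M → ℤ` onto the `ℤ` factor. -/
def torusBundleProj (M : GL (Fin 2) ℤ) (x : TorusBundleGroup M) : ℤ :=
  (SemidirectProduct.rightHom x).toAdd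

/-- The single relator `[a₁,b₁][a₂,b₂]⋯[a_g,b_g]` of the fundamental group of the
closed orientable surface of genus `g`; here `Sum.inl i` is the generator `aᵢ` and
`Sum.inr i` is the generator `bᵢ`. -/
def orientableSurfaceRels (g : ℕ) : Set (FreeGroup (Fin g ⊕ Fin g)) :=
  {(List.ofFn fun i : Fin g =>
      ⁅(FreeGroup.of (Sum.inl i) : FreeGroup (Fin g ⊕ Fin g)), FreeGroup.of (Sum.inr i)⁆).prod}

/-- The fundamental group `S_g = ⟨a₁, b₁, …, a_g, b_g ∣ [a₁,b₁]⋯[a_g,b_g] = 1⟩` of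
the closed orientable surface of genus `g`. -/
abbrev OrientableSurfaceGroup (g : ℕ) : Type :=
  PresentedGroup (orientableSurfaceRels g)

/-- Two elements of `G_M` whose `ℤ`-components vanish commute (they lie in the
abelian subgroup `ℤ²`). -/
lemma commute_of_right_eq_one (M : GL (Fin 2) ℤ) (p q : TorusBundleGroup M)
    (hp : p.right = 1) (hq : q.right = 1) : Commute p q := by
  have : ∀ (a b : TorusBundleGroup M), a.right = 1 → b.right = 1 →
      (a * b).left = a.left * b.left := by
    intro a b ha hb
    rw [SemidirectProduct.mul_left, ha, _root_.map_one]
    rfl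
  unfold Commute SemiconjBy
  ext
  · rw [this p q hp hq, this q p hq hp, mul_comm]
  · simp [SemidirectProduct.mul_right, hp, hq]

/-- Commutators in `G_M` commute with each other: `G_M` is metabelian. -/
lemma commute_commutators (M : GL (Fin 2) ℤ) (a b c d : TorusBundleGroup M) :
    Commute ⁅a, b⁆ ⁅c, d⁆ := by
  apply commute_of_right_eq_one
  · show SemidirectProduct.rightHom ⁅a, b⁆ = 1
    rw [map_commutatorElement]
    exact commutatorElement_eq_one_iff_commute.2 (mul_comm _ _)
  · show SemidirectProduct.rightHom ⁅c, d⁆ = 1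
    rw [map_commutatorElement]
    exact commutatorElement_eq_one_iff_commute.2 (mul_comm _ _)

/-- The target permutations for detecting nontriviality. -/
def permA : Equiv.Perm (Fin 5) := Equiv.swap 3 4
def permB : Equiv.Perm (Fin 5) := Equiv.swap 1 2 * Equiv.swap 2 3

/-- The map sending `a₁ ↦ α`, `b₁ ↦ β`, `a₂ ↦ β`, `b₂ ↦ α`, and all other
generators to `1`. -/
def genMap (n : ℕ) : (Fin (n + 2) ⊕ Fin (n + 2)) → Equiv.Perm (Fin 5)
  | Sum.inl i => if i = 0 then permA else if i = 1 then permB else 1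
  | Sum.inr i => if i = 0 then permB else if i = 1 then permA else 1

lemma genMap_inl0 (n : ℕ) : genMap n (Sum.inl 0) = permA := by simp [genMap]
lemma genMap_inr0 (n : ℕ) : genMap n (Sum.inr 0) = permB := by simp [genMap]
lemma genMap_inl1 (n : ℕ) : genMap n (Sum.inl 1) = permB := by
  simp [genMap, Fin.ext_iff]
lemma genMap_inr1 (n : ℕ) : genMap n (Sum.inr 1) = permA := by
  simp [genMap, Fin.ext_iff]

lemma genMap_rels (n : ℕ) : ∀ r ∈ orientableSurfaceRels (n + 2),
    FreeGroup.lift (genMap n) r = 1 := by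
  intro r hr
  rcases Set.mem_singleton_iff.1 hr with rfl
  rw [map_list_prod]
  rw [List.map_ofFn]
  rw [List.ofFn_succ, List.ofFn_succ]
  simp only [Function.comp_apply, map_commutatorElement, FreeGroup.lift_apply_of]
  rw [List.prod_cons, List.prod_cons]
  have h2 : ∀ i : Fin n, (genMap n) (Sum.inl i.succ.succ) = 1 := by
    intro i
    simp [genMap, Fin.succ_ne_zero, (Fin.succ_ne_zero i.succ),
      Fin.succ_injective, show (i.succ.succ : Fin (n+2)) ≠ 1 from
        fun h => Fin.succ_ne_zero i (Fin.succ_injective _ h)]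
  have h2' : ∀ i : Fin n, (genMap n) (Sum.inr i.succ.succ) = 1 := by
    intro i
    simp [genMap, Fin.succ_ne_zero, show (i.succ.succ : Fin (n+2)) ≠ 1 from
        fun h => Fin.succ_ne_zero i (Fin.succ_injective _ h)]
  have hrest : (List.ofFn fun i : Fin n =>
      ⁅genMap n (Sum.inl i.succ.succ), genMap n (Sum.inr i.succ.succ)⁆).prod = 1 := by
    apply List.prod_eq_one
    intro x hx
    rw [List.mem_ofFn] at hx
    obtain ⟨i, rfl⟩ := hx
    show ⁅genMap n (Sum.inl i.succ.succ), genMap n (Sum.inr i.succ.succ)⁆ = 1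
    rw [h2 i, h2' i]
    simp
  rw [hrest, mul_one]
  show ⁅genMap n (Sum.inl 0), genMap n (Sum.inr 0)⁆ *
    ⁅genMap n (Sum.inl 1), genMap n (Sum.inr 1)⁆ = 1
  rw [genMap_inl0, genMap_inr0, genMap_inl1, genMap_inr1]
  group

set_option maxRecDepth 4000 in
lemma key_ne_one : ⁅⁅permA, permB⁆, ⁅permB * permA, permB⁆⁆ ≠ 1 := by decide

/-- If `g ≥ 2` and `det M = 1`, then every homomorphism from the genus-`g` surface
group to the fundamental group of the torus bundle with monodromy `M` has
nontrivial kernel. -/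
theorem surface_group_hom_to_torus_bundle_not_injective (g : ℕ) (hg : 2 ≤ g)
    (M : GL (Fin 2) ℤ) (hM : (M : Matrix (Fin 2) (Fin 2) ℤ).det = 1)
    (f : OrientableSurfaceGroup g →* TorusBundleGroup M) :
    ∃ x : OrientableSurfaceGroup g, x ≠ 1 ∧ f x = 1 := by
  obtain ⟨n, rfl⟩ : ∃ n, g = n + 2 := ⟨g - 2, by omega⟩
  set a₁ : OrientableSurfaceGroup (n + 2) := PresentedGroup.of (Sum.inl 0)
  set b₁ : OrientableSurfaceGroup (n + 2) := PresentedGroup.of (Sum.inr 0)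
  set a₂ : OrientableSurfaceGroup (n + 2) := PresentedGroup.of (Sum.inl 1)
  refine ⟨⁅⁅a₁, b₁⁆, ⁅a₂ * a₁, b₁⁆⁆, ?_, ?_⟩
  · intro h
    apply key_ne_one
    have := congrArg (PresentedGroup.toGroup (genMap_rels n)) h
    simpa only [map_commutatorElement, _root_.map_mul, _root_.map_one,
      PresentedGroup.toGroup.of, genMap_inl0, genMap_inr0, genMap_inl1, a₁, b₁, a₂] using this
  · rw [map_commutatorElement, map_commutatorElement, map_commutatorElement]
    exact commutatorElement_eq_one_iff_commute.2 (commute_commutators M _ _ _ _)
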